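/- arXiv:2605.10042 — 2 statements merged into one kernel-verified Lean document; each statement's English description precedes it below -/
import Mathlib

section
/- Fix weights $F_1, \ldots, F_S > 0$ and values $\overline{U}_1, \ldots, \overline{U}_S \in [0,1]$. The maximizer over non-decreasing vectors $0 \le h_1 \le \cdots \le h_S \le 1$ of the log-likelihood $\ell(h) = \sum_{s=1}^S \big[ F_s \overline{U}_s \log h_s + F_s (1 - \overline{U}_s) \log(1 - h_s) \big]$ coincides with the minimizer over the same constraint set of the weighted least squares criterion $\sum_{s=1}^S F_s (\overline{U}_s - h_s)^2$. -/
open Finset Filter Topology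

/-- Extended-real logarithm with the convention `log 0 = -∞` (for arguments `≤ 0`). -/
noncomputable def elog (x : ℝ) : EReal := if x ≤ 0 then ⊥ else ((Real.log x : ℝ) : EReal)

/-- The Bernoulli log-likelihood `ℓ(h) = ∑ₛ Fₛ Ūₛ log hₛ + Fₛ (1-Ūₛ) log(1-hₛ)`, valued in
the extended reals with the conventions `0 · log 0 = 0` and `log 0 = -∞` (note that
`EReal` multiplication satisfies `0 * ⊥ = 0`). -/
noncomputable def bernLogLik {S : ℕ} (F U h : Fin S → ℝ) : EReal :=
  ∑ s, (((F s * U s : ℝ) : EReal) * elog (h s)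
        + ((F s * (1 - U s) : ℝ) : EReal) * elog (1 - h s))

private def IsoK {S : ℕ} (h : Fin S → ℝ) : Prop :=
  Monotone h ∧ ∀ s, h s ∈ Set.Icc (0:ℝ) 1

private noncomputable def LS {S : ℕ} (F U h : Fin S → ℝ) : ℝ := ∑ s, F s * (U s - h s)^2

private lemma aux_nonneg_of_eventually {A B : ℝ}
    (h : ∀ᶠ ε in 𝓝[>] (0:ℝ), 0 ≤ A * ε + B * ε ^ 2) : 0 ≤ A := by
  have h2 : ∀ᶠ ε in 𝓝[>] (0:ℝ), 0 ≤ A + B * ε := by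
    filter_upwards [h, self_mem_nhdsWithin] with ε h1 h2
    have hε : (0:ℝ) < ε := h2
    nlinarith
  have htend : Tendsto (fun ε : ℝ => A + B * ε) (𝓝[>] (0:ℝ)) (𝓝 A) := by
    have : Tendsto (fun ε : ℝ => A + B * ε) (𝓝 (0:ℝ)) (𝓝 (A + B * 0)) := by
      exact (continuous_const.add (continuous_const.mul continuous_id)).tendsto 0
    simpa using this.mono_left nhdsWithin_le_nhds
  exact ge_of_tendsto htend h2

private lemma exists_LS_min {S : ℕ} (F U : Fin S → ℝ) :
    ∃ h0 : Fin S → ℝ, IsoK h0 ∧ ∀ h, IsoK h → LS F U h0 ≤ LS F U h := by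
  have hclosed : IsClosed {h : Fin S → ℝ | IsoK h} := by
    have h1 : IsClosed {h : Fin S → ℝ | Monotone h} := by
      have : {h : Fin S → ℝ | Monotone h}
          = ⋂ (p : Fin S × Fin S) (_ : p.1 ≤ p.2), {h : Fin S → ℝ | h p.1 ≤ h p.2} := by
        ext h
        simp only [Set.mem_setOf_eq, Set.mem_iInter]
        exact ⟨fun hm p hp => hm hp, fun hm a b hab => hm (a, b) hab⟩
      rw [this]
      exact isClosed_iInter fun p => isClosed_iInter fun _ =>
        isClosed_le (continuous_apply p.1) (continuous_apply p.2)
    have h2 : IsClosed {h : Fin S → ℝ | ∀ s, h s ∈ Set.Icc (0:ℝ) 1} := by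
      have : {h : Fin S → ℝ | ∀ s, h s ∈ Set.Icc (0:ℝ) 1}
          = ⋂ s, (fun h : Fin S → ℝ => h s) ⁻¹' Set.Icc (0:ℝ) 1 := by
        ext h; simp
      rw [this]
      exact isClosed_iInter fun s => isClosed_Icc.preimage (continuous_apply s)
    exact h1.inter h2
  have hcompact : IsCompact {h : Fin S → ℝ | IsoK h} := by
    refine IsCompact.of_isClosed_subset (isCompact_univ_pi fun _ : Fin S =>
      isCompact_Icc (a := (0:ℝ)) (b := 1)) hclosed ?_
    intro h hh
    exact Set.mem_univ_pi.2 fun s => hh.2 s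
  have hne : {h : Fin S → ℝ | IsoK h}.Nonempty :=
    ⟨fun _ => 0, monotone_const, fun s => by norm_num⟩
  have hcont : Continuous (fun h : Fin S → ℝ => LS F U h) := by
    unfold LS
    exact continuous_finset_sum _ fun s _ =>
      continuous_const.mul ((continuous_const.sub (continuous_apply s)).pow 2)
  obtain ⟨h0, hh0, hmin⟩ := hcompact.exists_isMinOn hne hcont.continuousOn
  exact ⟨h0, hh0, fun h hh => hmin hh⟩

private lemma boundary {S : ℕ} (F U : Fin S → ℝ) (hF : ∀ s, 0 < F s)
    (hU : ∀ s, U s ∈ Set.Icc (0:ℝ) 1) (c : Fin S → ℝ) (hc : IsoK c)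
    (hmin : ∀ h, IsoK h → LS F U c ≤ LS F U h) :
    ∀ s, (c s = 0 → U s = 0) ∧ (c s = 1 → U s = 1) := by
  have key0 : ∑ t, (if c t = 0 then F t * U t else 0) ≤ 0 := by
    have hev : ∀ᶠ ε in 𝓝[>] (0:ℝ),
        0 ≤ (∑ t, (if c t = 0 then -2 * (F t * U t) else 0)) * ε
          + (∑ t, (if c t = 0 then F t else 0)) * ε ^ 2 := by
      have hcond : ∀ᶠ ε in 𝓝[>] (0:ℝ), (0 < ε ∧ ε < 1) ∧ ∀ t, 0 < c t → ε < c t := by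
        refine Filter.Eventually.and ?_ (Filter.eventually_all.2 fun t => ?_)
        · filter_upwards [Ioo_mem_nhdsGT_of_mem (Set.left_mem_Ico.2 one_pos)] with ε hε
          exact ⟨hε.1, hε.2⟩
        · by_cases ht : 0 < c t
          · filter_upwards [Ioo_mem_nhdsGT_of_mem (Set.left_mem_Ico.2 ht)] with ε hε
            exact fun _ => hε.2
          · exact Filter.Eventually.of_forall fun ε h' => absurd h' ht
      filter_upwards [hcond] with ε hε
      obtain ⟨⟨hε0, hε1⟩, hεc⟩ := hε
      have hfeas : IsoK (fun t => max (c t) ε) := by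
        refine ⟨hc.1.max monotone_const, fun t => ⟨?_, ?_⟩⟩
        · exact le_trans (hc.2 t).1 (le_max_left _ _)
        · exact max_le (hc.2 t).2 hε1.le
      have hLS := hmin _ hfeas
      have hdiff : LS F U (fun t => max (c t) ε) - LS F U c
          = (∑ t, (if c t = 0 then -2 * (F t * U t) else 0)) * ε
            + (∑ t, (if c t = 0 then F t else 0)) * ε ^ 2 := by
        unfold LS
        rw [← Finset.sum_sub_distrib, Finset.sum_mul, Finset.sum_mul, ← Finset.sum_add_distrib]
        refine Finset.sum_congr rfl fun t _ => ?_
        beta_reduce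
        by_cases ht : c t = 0
        · rw [ht, max_eq_right hε0.le, if_pos rfl, if_pos rfl]; ring
        · have hct : 0 < c t := lt_of_le_of_ne (hc.2 t).1 (Ne.symm ht)
          rw [max_eq_left (hεc t hct).le, if_neg ht, if_neg ht]; ring
      linarith [hLS, hdiff.symm.le, hdiff.le]
    have := aux_nonneg_of_eventually hev
    have h2 : ∑ t, (if c t = 0 then -2 * (F t * U t) else 0)
        = -2 * ∑ t, (if c t = 0 then F t * U t else 0) := by
      rw [Finset.mul_sum]
      refine Finset.sum_congr rfl fun t _ => ?_
      by_cases ht : c t = 0 <;> simp [ht]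
    rw [h2] at this; linarith
  have key1 : ∑ t, (if c t = 1 then F t * (1 - U t) else 0) ≤ 0 := by
    have hev : ∀ᶠ ε in 𝓝[>] (0:ℝ),
        0 ≤ (∑ t, (if c t = 1 then -2 * (F t * (1 - U t)) else 0)) * ε
          + (∑ t, (if c t = 1 then F t else 0)) * ε ^ 2 := by
      have hcond : ∀ᶠ ε in 𝓝[>] (0:ℝ), (0 < ε ∧ ε < 1) ∧ ∀ t, c t < 1 → ε < 1 - c t := by
        refine Filter.Eventually.and ?_ (Filter.eventually_all.2 fun t => ?_)
        · filter_upwards [Ioo_mem_nhdsGT_of_mem (Set.left_mem_Ico.2 one_pos)] with ε hε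
          exact ⟨hε.1, hε.2⟩
        · by_cases ht : c t < 1
          · filter_upwards [Ioo_mem_nhdsGT_of_mem (Set.left_mem_Ico.2 (by linarith : (0:ℝ) < 1 - c t))] with ε hε
            exact fun _ => hε.2
          · exact Filter.Eventually.of_forall fun ε h' => absurd h' ht
      filter_upwards [hcond] with ε hε
      obtain ⟨⟨hε0, hε1⟩, hεc⟩ := hε
      have hfeas : IsoK (fun t => min (c t) (1 - ε)) := by
        refine ⟨hc.1.min monotone_const, fun t => ⟨?_, ?_⟩⟩
        · exact le_min (hc.2 t).1 (by linarith)
        · exact le_trans (min_le_left _ _) (hc.2 t).2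
      have hLS := hmin _ hfeas
      have hdiff : LS F U (fun t => min (c t) (1 - ε)) - LS F U c
          = (∑ t, (if c t = 1 then -2 * (F t * (1 - U t)) else 0)) * ε
            + (∑ t, (if c t = 1 then F t else 0)) * ε ^ 2 := by
        unfold LS
        rw [← Finset.sum_sub_distrib, Finset.sum_mul, Finset.sum_mul, ← Finset.sum_add_distrib]
        refine Finset.sum_congr rfl fun t _ => ?_
        beta_reduce
        by_cases ht : c t = 1
        · rw [ht, min_eq_right (by linarith), if_pos rfl, if_pos rfl]; ring
        · have hct : c t < 1 := lt_of_le_of_ne (hc.2 t).2 ht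
          rw [min_eq_left (by linarith [hεc t hct]), if_neg ht, if_neg ht]; ring
      linarith [hLS, hdiff.le]
    have := aux_nonneg_of_eventually hev
    have h2 : ∑ t, (if c t = 1 then -2 * (F t * (1 - U t)) else 0)
        = -2 * ∑ t, (if c t = 1 then F t * (1 - U t) else 0) := by
      rw [Finset.mul_sum]
      refine Finset.sum_congr rfl fun t _ => ?_
      by_cases ht : c t = 1 <;> simp [ht]
    rw [h2] at this; linarith
  intro s
  constructor
  · intro hs0
    have hall := (Finset.sum_eq_zero_iff_of_nonneg (fun t _ => by
      by_cases ht : c t = 0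
      · simp only [if_pos ht]; exact mul_nonneg (hF t).le (hU t).1
      · simp [ht])).1 (le_antisymm key0 (Finset.sum_nonneg fun t _ => by
        by_cases ht : c t = 0
        · simp only [if_pos ht]; exact mul_nonneg (hF t).le (hU t).1
        · simp [ht]))
    have := hall s (Finset.mem_univ s)
    rw [if_pos hs0] at this
    have hF' := (hF s).ne'
    exact (mul_eq_zero.1 this).resolve_left hF'
  · intro hs1
    have hall := (Finset.sum_eq_zero_iff_of_nonneg (fun t _ => by
      by_cases ht : c t = 1
      · simp only [if_pos ht]; exact mul_nonneg (hF t).le (by linarith [(hU t).2])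
      · simp [ht])).1 (le_antisymm key1 (Finset.sum_nonneg fun t _ => by
        by_cases ht : c t = 1
        · simp only [if_pos ht]; exact mul_nonneg (hF t).le (by linarith [(hU t).2])
        · simp [ht]))
    have := hall s (Finset.mem_univ s)
    rw [if_pos hs1] at this
    have h0 : (1 : ℝ) - U s = 0 := (mul_eq_zero.1 this).resolve_left (hF s).ne'
    linarith

private lemma lemA {S : ℕ} (F U : Fin S → ℝ) (c : Fin S → ℝ) (hc : IsoK c)
    (hmin : ∀ h, IsoK h → LS F U c ≤ LS F U h)
    (φ : Fin S → ℝ) (hφ0 : ∀ s, 0 ≤ φ s)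
    (hφeq : ∀ s t, c s = c t → φ s = φ t)
    (hφb : ∀ s, c s = 0 ∨ c s = 1 → φ s = 0)
    (h : Fin S → ℝ) (hh : IsoK h) :
    ∑ s, F s * φ s * (U s - c s) * (h s - c s) ≤ 0 := by
  set d : Fin S → ℝ := fun s => φ s * (h s - c s) with hd
  have hkey : 0 ≤ ∑ s, -2 * (F s * d s * (U s - c s)) := by
    apply aux_nonneg_of_eventually (B := ∑ s, F s * d s ^ 2)
    have hmono : ∀ᶠ ε in 𝓝[>] (0:ℝ), ∀ p : Fin S × Fin S, p.1 ≤ p.2 →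
        c p.1 + ε * d p.1 ≤ c p.2 + ε * d p.2 := by
      refine Filter.eventually_all.2 fun p => ?_
      by_cases hp : p.1 ≤ p.2
      · rcases eq_or_lt_of_le (hc.1 hp) with hcc | hcc
        · -- equal values: works for all ε ≥ 0
          filter_upwards [self_mem_nhdsWithin] with ε (hε : (0:ℝ) < ε)
          intro _
          have hφe : φ p.1 = φ p.2 := hφeq _ _ hcc
          have hdd : d p.1 ≤ d p.2 := by
            rw [hd]
            simp only
            rw [← hφe, ← hcc]
            exact mul_le_mul_of_nonneg_left (by linarith [hh.1 hp]) (hφ0 p.1)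
          nlinarith
        · -- strict: continuity
          have h1 : Tendsto (fun ε : ℝ => c p.1 + ε * d p.1) (𝓝[>] (0:ℝ)) (𝓝 (c p.1)) := by
            have : Tendsto (fun ε : ℝ => c p.1 + ε * d p.1) (𝓝 (0:ℝ)) (𝓝 (c p.1 + 0 * d p.1)) :=
              (continuous_const.add (continuous_id.mul continuous_const)).tendsto 0
            simpa using this.mono_left nhdsWithin_le_nhds
          have h2 : Tendsto (fun ε : ℝ => c p.2 + ε * d p.2) (𝓝[>] (0:ℝ)) (𝓝 (c p.2)) := by
            have : Tendsto (fun ε : ℝ => c p.2 + ε * d p.2) (𝓝 (0:ℝ)) (𝓝 (c p.2 + 0 * d p.2)) :=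
              (continuous_const.add (continuous_id.mul continuous_const)).tendsto 0
            simpa using this.mono_left nhdsWithin_le_nhds
          filter_upwards [h1.eventually_lt h2 hcc] with ε hε
          exact fun _ => hε.le
      · exact Filter.Eventually.of_forall fun ε h' => absurd h' hp
    have hbds : ∀ᶠ ε in 𝓝[>] (0:ℝ), ∀ s, c s + ε * d s ∈ Set.Icc (0:ℝ) 1 := by
      refine Filter.eventually_all.2 fun s => ?_
      by_cases hbs : c s = 0 ∨ c s = 1
      · have : d s = 0 := by rw [hd]; simp only; rw [hφb s hbs]; ring
        refine Filter.Eventually.of_forall fun ε => ?_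
        rw [this]
        simpa using hc.2 s
      · push_neg at hbs
        have h0 : 0 < c s := lt_of_le_of_ne (hc.2 s).1 (Ne.symm hbs.1)
        have h1 : c s < 1 := lt_of_le_of_ne (hc.2 s).2 hbs.2
        have ht : Tendsto (fun ε : ℝ => c s + ε * d s) (𝓝[>] (0:ℝ)) (𝓝 (c s)) := by
          have : Tendsto (fun ε : ℝ => c s + ε * d s) (𝓝 (0:ℝ)) (𝓝 (c s + 0 * d s)) :=
            (continuous_const.add (continuous_id.mul continuous_const)).tendsto 0
          simpa using this.mono_left nhdsWithin_le_nhds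
        have e1 : ∀ᶠ ε in 𝓝[>] (0:ℝ), 0 < c s + ε * d s :=
          tendsto_const_nhds.eventually_lt ht h0
        have e2 : ∀ᶠ ε in 𝓝[>] (0:ℝ), c s + ε * d s < 1 :=
          ht.eventually_lt tendsto_const_nhds h1
        filter_upwards [e1, e2] with ε he1 he2
        exact ⟨he1.le, he2.le⟩
    filter_upwards [hmono, hbds] with ε hε1 hε2
    have hfeas : IsoK (fun s => c s + ε * d s) := by
      refine ⟨fun a b hab => hε1 (a, b) hab, hε2⟩
    have hLS := hmin _ hfeas
    have hdiff : LS F U (fun s => c s + ε * d s) - LS F U c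
        = (∑ s, -2 * (F s * d s * (U s - c s))) * ε + (∑ s, F s * d s ^ 2) * ε ^ 2 := by
      unfold LS
      rw [← Finset.sum_sub_distrib, Finset.sum_mul, Finset.sum_mul, ← Finset.sum_add_distrib]
      refine Finset.sum_congr rfl fun s _ => ?_
      beta_reduce
      ring
    linarith [hLS, hdiff.le]
  have : ∑ s, -2 * (F s * d s * (U s - c s)) = -2 * ∑ s, F s * φ s * (U s - c s) * (h s - c s) := by
    rw [Finset.mul_sum]
    refine Finset.sum_congr rfl fun s _ => ?_
    rw [hd]
    ring
  rw [this] at hkey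
  linarith

private lemma elog_coe_of_pos {x : ℝ} (hx : 0 < x) : elog x = ((Real.log x : ℝ) : EReal) :=
  if_neg (not_le.2 hx)

private lemma elog_bot {x : ℝ} (hx : x ≤ 0) : elog x = ⊥ := if_pos hx

private lemma EReal_coe_sum {ι : Type*} (s : Finset ι) (f : ι → ℝ) :
    ((∑ i ∈ s, f i : ℝ) : EReal) = ∑ i ∈ s, ((f i : ℝ) : EReal) :=
  map_sum (⟨⟨Real.toEReal, EReal.coe_zero⟩, EReal.coe_add⟩ : ℝ →+ EReal) f s

private lemma mul_elog_nonpos {a x : ℝ} (ha : 0 ≤ a) (hx : x ≤ 1) : (a : EReal) * elog x ≤ 0 := by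
  rcases le_or_gt x 0 with h | h
  · rw [elog_bot h]
    rcases eq_or_lt_of_le ha with rfl | ha'
    · simp
    · rw [EReal.coe_mul_bot_of_pos ha']; exact bot_le
  · rw [elog_coe_of_pos h, ← EReal.coe_mul]
    rw [show (0 : EReal) = ((0:ℝ) : EReal) from rfl, EReal.coe_le_coe_iff]
    exact mul_nonpos_of_nonneg_of_nonpos ha (Real.log_nonpos h.le hx)

private lemma mul_elog_le_linear {a c : ℝ} (ha : 0 ≤ a) (hc : 0 < c) (x : ℝ) :
    (a : EReal) * elog x ≤ ((a * (Real.log c + (x - c)/c) : ℝ) : EReal) := by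
  rcases eq_or_lt_of_le ha with rfl | ha'
  · simp
  rcases le_or_gt x 0 with h | h
  · rw [elog_bot h, EReal.coe_mul_bot_of_pos ha']; exact bot_le
  · rw [elog_coe_of_pos h, ← EReal.coe_mul, EReal.coe_le_coe_iff]
    have h1 : Real.log (x / c) ≤ x / c - 1 := Real.log_le_sub_one_of_pos (div_pos h hc)
    rw [Real.log_div (ne_of_gt h) (ne_of_gt hc)] at h1
    have h2 : x / c - 1 = (x - c)/c := by field_simp
    rw [h2] at h1
    nlinarith

private lemma term_eq_real {a b x : ℝ} (ha : 0 ≤ a) (hb : 0 ≤ b)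
    (hx1 : 0 < a → 0 < x) (hx2 : 0 < b → x < 1) :
    (a : EReal) * elog x + (b : EReal) * elog (1 - x)
      = ((a * Real.log x + b * Real.log (1 - x) : ℝ) : EReal) := by
  have e1 : (a : EReal) * elog x = ((a * Real.log x : ℝ) : EReal) := by
    rcases eq_or_lt_of_le ha with rfl | ha'
    · simp
    · rw [elog_coe_of_pos (hx1 ha'), ← EReal.coe_mul]
  have e2 : (b : EReal) * elog (1 - x) = ((b * Real.log (1 - x) : ℝ) : EReal) := by
    rcases eq_or_lt_of_le hb with rfl | hb'
    · simp
    · rw [elog_coe_of_pos (by linarith [hx2 hb'] : 0 < 1 - x), ← EReal.coe_mul]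
  rw [e1, e2, ← EReal.coe_add]

/-- The real-valued per-coordinate likelihood term. -/
private noncomputable def Rt (Fv Uv x : ℝ) : ℝ :=
  Fv * Uv * Real.log x + Fv * (1 - Uv) * Real.log (1 - x)

private lemma log_mid_strict {x y : ℝ} (hx : 0 < x) (hy : 0 < y) (hne : x ≠ y) :
    Real.log x + Real.log y < 2 * Real.log ((x + y)/2) := by
  have h := strictConcaveOn_log_Ioi.2 (Set.mem_Ioi.2 hx) (Set.mem_Ioi.2 hy) hne
    (by norm_num : (0:ℝ) < 1/2) (by norm_num : (0:ℝ) < 1/2) (by norm_num)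
  simp only [smul_eq_mul] at h
  have he : (1/2 : ℝ) * x + (1/2 : ℝ) * y = (x + y)/2 := by ring
  rw [he] at h
  linarith

private lemma Rt_mid_strict {Fv Uv x y : ℝ} (hFv : 0 < Fv) (hU0 : 0 ≤ Uv) (hU1 : Uv ≤ 1)
    (hx1 : 0 < Uv → 0 < x) (hx2 : Uv < 1 → x < 1)
    (hy1 : 0 < Uv → 0 < y) (hy2 : Uv < 1 → y < 1) (hne : x ≠ y) :
    Rt Fv Uv x + Rt Fv Uv y < 2 * Rt Fv Uv ((x + y)/2) := by
  unfold Rt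
  have key1 : 0 < Uv →
      Uv * (Real.log x + Real.log y) < Uv * (2 * Real.log ((x + y)/2)) := fun hUv =>
    mul_lt_mul_of_pos_left (log_mid_strict (hx1 hUv) (hy1 hUv) hne) hUv
  have key2 : Uv < 1 →
      (1 - Uv) * (Real.log (1 - x) + Real.log (1 - y))
        < (1 - Uv) * (2 * Real.log (1 - (x + y)/2)) := by
    intro hUv
    have h := log_mid_strict (by linarith [hx2 hUv] : 0 < 1 - x)
      (by linarith [hy2 hUv] : 0 < 1 - y) (by intro hc; exact hne (by linarith))
    have he : ((1 - x) + (1 - y))/2 = 1 - (x + y)/2 := by ring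
    rw [he] at h
    exact mul_lt_mul_of_pos_left h (by linarith)
  rcases eq_or_lt_of_le hU0 with h0 | h0
  · -- Uv = 0
    have h2 := key2 (by linarith)
    rw [← h0]
    nlinarith
  rcases eq_or_lt_of_le hU1 with h1 | h1
  · -- Uv = 1
    have hk := key1 h0
    rw [h1]
    nlinarith
  · have h2 := key2 h1
    have hk := key1 h0
    nlinarith

private lemma Rt_mid {Fv Uv x y : ℝ} (hFv : 0 < Fv) (hU0 : 0 ≤ Uv) (hU1 : Uv ≤ 1)
    (hx1 : 0 < Uv → 0 < x) (hx2 : Uv < 1 → x < 1)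
    (hy1 : 0 < Uv → 0 < y) (hy2 : Uv < 1 → y < 1) :
    Rt Fv Uv x + Rt Fv Uv y ≤ 2 * Rt Fv Uv ((x + y)/2) := by
  by_cases hne : x = y
  · subst hne
    have : (x + x)/2 = x := by ring
    rw [this]
    ring_nf
    exact le_refl _
  · exact (Rt_mid_strict hFv hU0 hU1 hx1 hx2 hy1 hy2 hne).le

private lemma min_interior {S : ℕ} (F U : Fin S → ℝ) (hF : ∀ s, 0 < F s)
    (hU : ∀ s, U s ∈ Set.Icc (0:ℝ) 1) (c : Fin S → ℝ) (hc : IsoK c)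
    (hmin : ∀ h, IsoK h → LS F U c ≤ LS F U h) :
    ∀ s, (0 < U s → 0 < c s) ∧ (U s < 1 → c s < 1) := by
  intro s
  have hb := boundary F U hF hU c hc hmin s
  constructor
  · intro hUs
    rcases eq_or_lt_of_le (hc.2 s).1 with h0 | h0
    · exact absurd (hb.1 h0.symm) (by linarith)
    · exact h0
  · intro hUs
    rcases eq_or_lt_of_le (hc.2 s).2 with h1 | h1
    · exact absurd (hb.2 h1) (by linarith)
    · exact h1

private lemma bernLogLik_eq_real {S : ℕ} (F U : Fin S → ℝ) (hF : ∀ s, 0 < F s)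
    (hU : ∀ s, U s ∈ Set.Icc (0:ℝ) 1) (c : Fin S → ℝ)
    (hint : ∀ s, (0 < U s → 0 < c s) ∧ (U s < 1 → c s < 1)) :
    bernLogLik F U c = ((∑ s, Rt (F s) (U s) (c s) : ℝ) : EReal) := by
  rw [bernLogLik, EReal_coe_sum]
  refine Finset.sum_congr rfl fun s _ => ?_
  have ha : (0:ℝ) ≤ F s * U s := mul_nonneg (hF s).le (hU s).1
  have hb : (0:ℝ) ≤ F s * (1 - U s) := mul_nonneg (hF s).le (by linarith [(hU s).2])
  have hx1 : 0 < F s * U s → 0 < c s := by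
    intro hpos
    have hUs : 0 < U s := by nlinarith [hF s, (hU s).1]
    exact (hint s).1 hUs
  have hx2 : 0 < F s * (1 - U s) → c s < 1 := by
    intro hpos
    have hUs : U s < 1 := by nlinarith [hF s, (hU s).2]
    exact (hint s).2 hUs
  rw [term_eq_real ha hb hx1 hx2]
  rfl

private lemma sum_bot_of_nonpos {ι : Type*} [Fintype ι] (f : ι → EReal)
    (hnp : ∀ i, f i ≤ 0) (i0 : ι) (hb : f i0 = ⊥) : ∑ i, f i = ⊥ := by
  classical
  have h1 : ∑ i, f i ≤ ∑ i, (if i = i0 then f i0 else 0) := by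
    refine Finset.sum_le_sum fun i _ => ?_
    by_cases hi : i = i0
    · subst hi; simp
    · simp only [if_neg hi]; exact hnp i
  rw [Finset.sum_ite_eq' Finset.univ i0 (fun _ => f i0), if_pos (Finset.mem_univ i0), hb] at h1
  exact le_bot_iff.1 h1

private lemma terms_ne_bot {S : ℕ} (F U : Fin S → ℝ) (hF : ∀ s, 0 < F s)
    (hU : ∀ s, U s ∈ Set.Icc (0:ℝ) 1) (c : Fin S → ℝ) (hc : IsoK c)
    (hne : bernLogLik F U c ≠ ⊥) :
    ∀ s, (0 < U s → 0 < c s) ∧ (U s < 1 → c s < 1) := by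
  have hnp : ∀ s, (((F s * U s : ℝ) : EReal) * elog (c s)
      + ((F s * (1 - U s) : ℝ) : EReal) * elog (1 - c s)) ≤ 0 := fun s =>
    add_nonpos (mul_elog_nonpos (mul_nonneg (hF s).le (hU s).1) (hc.2 s).2)
      (mul_elog_nonpos (mul_nonneg (hF s).le (by linarith [(hU s).2])) (by linarith [(hc.2 s).1]))
  intro s
  constructor
  · intro hUs
    by_contra hcs
    push_neg at hcs
    have h0 : c s ≤ 0 := hcs
    have hterm : (((F s * U s : ℝ) : EReal) * elog (c s)
        + ((F s * (1 - U s) : ℝ) : EReal) * elog (1 - c s)) = ⊥ := by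
      rw [elog_bot h0, EReal.coe_mul_bot_of_pos (mul_pos (hF s) hUs), EReal.bot_add]
    exact hne (sum_bot_of_nonpos _ hnp s hterm)
  · intro hUs
    by_contra hcs
    push_neg at hcs
    have h0 : 1 - c s ≤ 0 := by linarith
    have hterm : (((F s * U s : ℝ) : EReal) * elog (c s)
        + ((F s * (1 - U s) : ℝ) : EReal) * elog (1 - c s)) = ⊥ := by
      rw [elog_bot h0, EReal.coe_mul_bot_of_pos (mul_pos (hF s) (by linarith)), EReal.add_bot]
    exact hne (sum_bot_of_nonpos _ hnp s hterm)

private lemma LSmin_maximizes {S : ℕ} (F U : Fin S → ℝ) (hF : ∀ s, 0 < F s)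
    (hU : ∀ s, U s ∈ Set.Icc (0:ℝ) 1) (c : Fin S → ℝ) (hc : IsoK c)
    (hmin : ∀ h, IsoK h → LS F U c ≤ LS F U h) :
    ∀ h, IsoK h → bernLogLik F U h ≤ bernLogLik F U c := by
  intro h hh
  have hbd := boundary F U hF hU c hc hmin
  set φ : Fin S → ℝ := fun s => if 0 < c s ∧ c s < 1 then 1/(c s * (1 - c s)) else 0 with hφ
  set v : Fin S → ℝ := fun s => φ s * (U s - c s) with hv
  have hcval : bernLogLik F U c = ((∑ s, Rt (F s) (U s) (c s) : ℝ) : EReal) :=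
    bernLogLik_eq_real F U hF hU c (min_interior F U hF hU c hc hmin)
  have hbound : ∀ s, (((F s * U s : ℝ) : EReal) * elog (h s)
        + ((F s * (1 - U s) : ℝ) : EReal) * elog (1 - h s))
      ≤ ((Rt (F s) (U s) (c s) + F s * v s * (h s - c s) : ℝ) : EReal) := by
    intro s
    have ha : (0:ℝ) ≤ F s * U s := mul_nonneg (hF s).le (hU s).1
    have hb : (0:ℝ) ≤ F s * (1 - U s) := mul_nonneg (hF s).le (by linarith [(hU s).2])
    by_cases hint : 0 < c s ∧ c s < 1
    · have b1 := mul_elog_le_linear ha hint.1 (h s)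
      have b2 := mul_elog_le_linear hb (show (0:ℝ) < 1 - c s by linarith [hint.2]) (1 - h s)
      refine le_trans (add_le_add b1 b2) ?_
      rw [← EReal.coe_add, EReal.coe_le_coe_iff]
      have hveq : v s = (U s - c s) / (c s * (1 - c s)) := by
        rw [hv]
        simp only
        rw [hφ]
        simp only
        rw [if_pos hint]
        ring
      rw [hveq]
      have hc0 : c s ≠ 0 := ne_of_gt hint.1
      have hc1 : (1:ℝ) - c s ≠ 0 := by linarith [hint.2]
      unfold Rt
      rw [le_iff_lt_or_eq]
      right
      field_simp
      ring
    · have hbcase : c s = 0 ∨ c s = 1 := by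
        rcases hc.2 s with ⟨h0, h1⟩
        by_contra hcon
        push_neg at hcon
        exact hint ⟨lt_of_le_of_ne h0 (Ne.symm hcon.1), lt_of_le_of_ne h1 hcon.2⟩
      have hvs : v s = 0 := by
        rw [hv]; simp only; rw [hφ]; simp only; rw [if_neg hint]; ring
      rcases hbcase with h0 | h1
      · have hU0 : U s = 0 := (hbd s).1 h0
        have hrhs : ((Rt (F s) (U s) (c s) + F s * v s * (h s - c s) : ℝ) : EReal) = (0 : EReal) := by
          rw [hvs]
          unfold Rt
          rw [hU0, h0]
          norm_num
        rw [hrhs]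
        have hcoef : (F s * U s : ℝ) = 0 := by rw [hU0]; ring
        rw [hcoef]
        rw [EReal.coe_zero, EReal.zero_mul, zero_add]
        exact mul_elog_nonpos hb (by linarith [(hh.2 s).1])
      · have hU1 : U s = 1 := (hbd s).2 h1
        have hrhs : ((Rt (F s) (U s) (c s) + F s * v s * (h s - c s) : ℝ) : EReal) = (0 : EReal) := by
          rw [hvs]
          unfold Rt
          rw [hU1, h1]
          norm_num
        rw [hrhs]
        have hcoef : (F s * (1 - U s) : ℝ) = 0 := by rw [hU1]; ring
        rw [hcoef]
        rw [EReal.coe_zero, EReal.zero_mul, add_zero]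
        exact mul_elog_nonpos ha (hh.2 s).2
  calc bernLogLik F U h
      ≤ ∑ s, ((Rt (F s) (U s) (c s) + F s * v s * (h s - c s) : ℝ) : EReal) :=
        Finset.sum_le_sum fun s _ => hbound s
    _ = ((∑ s, (Rt (F s) (U s) (c s) + F s * v s * (h s - c s)) : ℝ) : EReal) :=
        (EReal_coe_sum _ _).symm
    _ ≤ ((∑ s, Rt (F s) (U s) (c s) : ℝ) : EReal) := by
        rw [EReal.coe_le_coe_iff, Finset.sum_add_distrib]
        have hφ0 : ∀ s, 0 ≤ φ s := by
          intro s
          rw [hφ]; simp only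
          by_cases hint : 0 < c s ∧ c s < 1
          · rw [if_pos hint]
            exact le_of_lt (div_pos one_pos (mul_pos hint.1 (by linarith [hint.2])))
          · rw [if_neg hint]
        have hφeq : ∀ s t, c s = c t → φ s = φ t := by
          intro s t hst
          rw [hφ]; simp only; rw [hst]
        have hφb : ∀ s, c s = 0 ∨ c s = 1 → φ s = 0 := by
          intro s hs
          rw [hφ]; simp only
          rcases hs with h0 | h1
          · rw [if_neg]; rintro ⟨hlt, -⟩; rw [h0] at hlt; exact lt_irrefl 0 hlt
          · rw [if_neg]; rintro ⟨-, hlt⟩; rw [h1] at hlt; exact lt_irrefl 1 hlt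
        have key := lemA F U c hc hmin φ hφ0 hφeq hφb h hh
        have heq : ∑ s, F s * v s * (h s - c s)
            = ∑ s, F s * φ s * (U s - c s) * (h s - c s) := by
          refine Finset.sum_congr rfl fun s _ => ?_
          rw [hv]; ring
        linarith [heq ▸ key]
    _ = bernLogLik F U c := hcval.symm

/-- over the monotone cone `0 ≤ h₁ ≤ ⋯ ≤ h_S ≤ 1`, maximizing the Bernoulli
log-likelihood is the same as minimizing the weighted least squares criterion
`∑ₛ Fₛ (Ūₛ - hₛ)²`. -/
theorem stmt6 {S : ℕ} (F U : Fin S → ℝ)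
    (hF : ∀ s, 0 < F s) (hU : ∀ s, U s ∈ Set.Icc (0 : ℝ) 1)
    (K : (Fin S → ℝ) → Prop)
    (hK : ∀ h, K h ↔ (Monotone h ∧ ∀ s, h s ∈ Set.Icc (0 : ℝ) 1)) :
    ∀ hstar : Fin S → ℝ, K hstar →
      ((∀ h, K h → bernLogLik F U h ≤ bernLogLik F U hstar) ↔
        (∀ h, K h → ∑ s, F s * (U s - hstar s) ^ 2 ≤ ∑ s, F s * (U s - h s) ^ 2)) := by
  intro hstar hKstar
  have hKstar' : IsoK hstar := (hK hstar).1 hKstar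
  constructor
  · -- maximizer of log-lik ⟹ minimizer of LS
    intro hmax
    obtain ⟨c, hcK, hcmin⟩ := exists_LS_min F U
    have hcmax := LSmin_maximizes F U hF hU c hcK hcmin
    have heq : hstar = c := by
      by_contra hne
      have h1 : bernLogLik F U c ≤ bernLogLik F U hstar := hmax c ((hK c).2 hcK)
      have h2 : bernLogLik F U hstar ≤ bernLogLik F U c := hcmax hstar hKstar'
      have hMeq : bernLogLik F U hstar = bernLogLik F U c := le_antisymm h2 h1
      have hintc : ∀ s, (0 < U s → 0 < c s) ∧ (U s < 1 → c s < 1) :=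
        min_interior F U hF hU c hcK hcmin
      have hcval : bernLogLik F U c = ((∑ s, Rt (F s) (U s) (c s) : ℝ) : EReal) :=
        bernLogLik_eq_real F U hF hU c hintc
      have hstarnb : bernLogLik F U hstar ≠ ⊥ := by
        rw [hMeq, hcval]; exact EReal.coe_ne_bot _
      have hintstar : ∀ s, (0 < U s → 0 < hstar s) ∧ (U s < 1 → hstar s < 1) :=
        terms_ne_bot F U hF hU hstar hKstar' hstarnb
      have hstarval : bernLogLik F U hstar = ((∑ s, Rt (F s) (U s) (hstar s) : ℝ) : EReal) :=
        bernLogLik_eq_real F U hF hU hstar hintstar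
      have hsum_eq : ∑ s, Rt (F s) (U s) (hstar s) = ∑ s, Rt (F s) (U s) (c s) := by
        have := hstarval.symm.trans (hMeq.trans hcval)
        exact_mod_cast this
      -- midpoint
      set m : Fin S → ℝ := fun s => (hstar s + c s)/2 with hm
      have hmK : IsoK m := by
        constructor
        · intro a b hab
          have h1 := hKstar'.1 hab
          have h2 := hcK.1 hab
          simp only [hm]
          linarith
        · intro s
          have h1 := hKstar'.2 s
          have h2 := hcK.2 s
          simp only [hm]
          constructor
          · linarith [h1.1, h2.1]
          · linarith [h1.2, h2.2]
      have hintm : ∀ s, (0 < U s → 0 < m s) ∧ (U s < 1 → m s < 1) := by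
        intro s
        constructor
        · intro hUs
          have := (hintstar s).1 hUs
          have := (hintc s).1 hUs
          simp only [hm]; linarith
        · intro hUs
          have := (hintstar s).2 hUs
          have := (hintc s).2 hUs
          simp only [hm]; linarith
      have hmval : bernLogLik F U m = ((∑ s, Rt (F s) (U s) (m s) : ℝ) : EReal) :=
        bernLogLik_eq_real F U hF hU m hintm
      -- strict sum inequality
      obtain ⟨s0, hs0⟩ : ∃ s, hstar s ≠ c s := by
        by_contra hcon
        push_neg at hcon
        exact hne (funext hcon)
      have hsum_lt : ∑ s, (Rt (F s) (U s) (hstar s) + Rt (F s) (U s) (c s))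
          < ∑ s, 2 * Rt (F s) (U s) (m s) := by
        refine Finset.sum_lt_sum (fun s _ => ?_) ⟨s0, Finset.mem_univ s0, ?_⟩
        · exact Rt_mid (hF s) (hU s).1 (hU s).2 (hintstar s).1 (hintstar s).2
            (hintc s).1 (hintc s).2
        · exact Rt_mid_strict (hF s0) (hU s0).1 (hU s0).2 (hintstar s0).1 (hintstar s0).2
            (hintc s0).1 (hintc s0).2 hs0
      rw [Finset.sum_add_distrib, hsum_eq, ← Finset.mul_sum] at hsum_lt
      have hlt : ∑ s, Rt (F s) (U s) (c s) < ∑ s, Rt (F s) (U s) (m s) := by linarith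
      have : bernLogLik F U hstar < bernLogLik F U m := by
        rw [hstarval, hmval, EReal.coe_lt_coe_iff, hsum_eq]
        exact hlt
      exact absurd (hmax m ((hK m).2 hmK)) (not_le.2 this)
    intro h hh
    have := hcmin h ((hK h).1 hh)
    rw [heq]
    exact this
  · -- minimizer of LS ⟹ maximizer of log-lik
    intro hmin h hh
    exact LSmin_maximizes F U hF hU hstar hKstar'
      (fun h' hh' => hmin h' ((hK h').2 hh')) h ((hK h).1 hh)
end

section
/- Let $F_1,\ldots,F_S > 0$, $\overline{U}_1,\ldots,\overline{U}_S \in \mathbb{R}$, $h_0 \in \mathbb{R}$, and fix $1 \le s_0 \le S$. Consider minimizing $\sum_{s=1}^S F_s(\overline{U}_s - h_s)^2$ over vectors satisfying $h_1 \le \cdots \le h_{s_0} \le h_0 \le h_{s_0+1} \le \cdots \le h_S$. Then the constrained problem decouples: the minimizer restricted to indices $s \le s_0$ equals the componentwise minimum of $h_0$ and the unconstrained isotonic regression of $(\overline{U}_1, \ldots, \overline{U}_{s_0})$ with weights $(F_1,\ldots,F_{s_0})$, and the minimizer restricted to indices $s > s_0$ equals the componentwise maximum of $h_0$ and the unconstrained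 isotonic regression of $(\overline{U}_{s_0+1}, \ldots, \overline{U}_S)$ with weights $(F_{s_0+1},\ldots,F_S)$. -/
open Finset

lemma stmt8_key_down (S : ℕ) (F U : Fin S → ℝ) (hF : ∀ s, 0 < F s)
    (h0 : ℝ) (s0 : Fin S) (g : Fin S → ℝ)
    (hmono : Monotone g)
    (hle : ∀ i, i ≤ s0 → g i ≤ h0)
    (hge : ∀ i, s0 < i → h0 ≤ g i)
    (hmin : ∀ g' : Fin S → ℝ, Monotone g' → (∀ i, i ≤ s0 → g' i ≤ h0) →
      (∀ i, s0 < i → h0 ≤ g' i) →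
      ∑ s, F s * (U s - g s) ^ 2 ≤ ∑ s, F s * (U s - g' s) ^ 2)
    (j k : Fin S) (hjk : j ≤ k)
    (hj : ∀ i, i < j → g i < g j)
    (hcap : ∀ i, j ≤ i → i ≤ k → s0 < i → h0 < g i) :
    0 ≤ ∑ i ∈ Finset.Icc j k, F i * (U i - g i) := by
  set c := ∑ i ∈ Finset.Icc j k, F i * (U i - g i) with hc
  set W := ∑ i ∈ Finset.Icc j k, F i with hW
  have hWpos : 0 < W := Finset.sum_pos (fun i _ => hF i) (Finset.nonempty_Icc.mpr hjk)
  set B : Finset ℝ := insert 1 (((Finset.Iio j).image fun i => g j - g i) ∪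
      (((Finset.Icc j k).filter fun i => s0 < i).image fun i => g i - h0)) with hB
  have hBne : B.Nonempty := ⟨1, Finset.mem_insert_self _ _⟩
  set b := B.min' hBne with hb
  have hbpos : 0 < b := by
    rw [hb, Finset.lt_min'_iff]
    intro x hx
    rw [hB] at hx
    rcases Finset.mem_insert.mp hx with h | h
    · simp [h]
    · rcases Finset.mem_union.mp h with h | h
      · obtain ⟨i, hi, rfl⟩ := Finset.mem_image.mp h
        have := hj i (Finset.mem_Iio.mp hi); linarith
      · obtain ⟨i, hi, rfl⟩ := Finset.mem_image.mp h
        obtain ⟨hi1, hi2⟩ := Finset.mem_filter.mp hi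
        have := hcap i (Finset.mem_Icc.mp hi1).1 (Finset.mem_Icc.mp hi1).2 hi2
        linarith
  have key : ∀ ε : ℝ, 0 < ε → ε ≤ b → 0 ≤ 2 * ε * c + ε ^ 2 * W := by
    intro ε hε hεb
    have hεle : ∀ x ∈ B, ε ≤ x := fun x hx => hεb.trans (Finset.min'_le _ _ hx)
    set h : Fin S → ℝ := fun i => if i ∈ Finset.Icc j k then g i - ε else g i with hh
    have hmono' : Monotone h := by
      intro i1 i2 h12
      by_cases m1 : i1 ∈ Finset.Icc j k <;> by_cases m2 : i2 ∈ Finset.Icc j k <;>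
        simp only [hh, m1, m2, if_pos, if_neg, if_true, if_false]
      · exact sub_le_sub_right (hmono h12) ε
      · have := hmono h12; linarith
      · have hi1j : i1 < j := by
          by_contra hcon
          exact m1 (Finset.mem_Icc.mpr ⟨not_lt.mp hcon, h12.trans (Finset.mem_Icc.mp m2).2⟩)
        have hmem : (g j - g i1) ∈ B := by
          rw [hB]
          exact Finset.mem_insert_of_mem (Finset.mem_union_left _
            (Finset.mem_image.mpr ⟨i1, Finset.mem_Iio.mpr hi1j, rfl⟩))
        have h1 := hεle _ hmem
        have h2 : g j ≤ g i2 := hmono (Finset.mem_Icc.mp m2).1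
        linarith
      · exact hmono h12
    have hle' : ∀ i, i ≤ s0 → h i ≤ h0 := by
      intro i his
      by_cases m : i ∈ Finset.Icc j k <;> simp only [hh, m, if_pos, if_neg, if_true, if_false]
      · have := hle i his; linarith
      · exact hle i his
    have hge' : ∀ i, s0 < i → h0 ≤ h i := by
      intro i his
      by_cases m : i ∈ Finset.Icc j k <;> simp only [hh, m, if_pos, if_neg, if_true, if_false]
      · have hmem : (g i - h0) ∈ B := by
          rw [hB]
          exact Finset.mem_insert_of_mem (Finset.mem_union_right _
            (Finset.mem_image.mpr ⟨i, Finset.mem_filter.mpr ⟨m, his⟩, rfl⟩))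
        have := hεle _ hmem
        linarith
      · exact hge i his
    have hQ := hmin h hmono' hle' hge'
    have e2 : ∑ s, F s * (U s - h s) ^ 2 - ∑ s, F s * (U s - g s) ^ 2
        = ∑ i ∈ Finset.Icc j k, (2 * ε * (F i * (U i - g i)) + ε ^ 2 * F i) := by
      rw [← Finset.sum_sub_distrib,
          ← Finset.sum_subset (Finset.subset_univ (Finset.Icc j k))
            (fun i _ hi => by simp only [hh]; rw [if_neg hi]; ring)]
      refine Finset.sum_congr rfl fun i hi => ?_
      simp only [hh, if_pos hi]
      ring
    rw [Finset.sum_add_distrib, ← Finset.mul_sum, ← Finset.mul_sum, ← hc, ← hW] at e2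
    linarith
  by_contra hcon
  push_neg at hcon
  have hεpos : 0 < min b (-c / W) := lt_min hbpos (div_pos (neg_pos.mpr hcon) hWpos)
  have h1 : min b (-c / W) ≤ -c / W := min_le_right _ _
  have h2 : min b (-c / W) * W ≤ -c := (le_div_iff₀ hWpos).mp h1
  have h3 := key _ hεpos (min_le_left _ _)
  nlinarith [mul_le_mul_of_nonneg_left h2 hεpos.le, mul_pos hεpos (neg_pos.mpr hcon)]

lemma stmt8_key_up (S : ℕ) (F U : Fin S → ℝ) (hF : ∀ s, 0 < F s)
    (h0 : ℝ) (s0 : Fin S) (g : Fin S → ℝ)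
    (hmono : Monotone g)
    (hle : ∀ i, i ≤ s0 → g i ≤ h0)
    (hge : ∀ i, s0 < i → h0 ≤ g i)
    (hmin : ∀ g' : Fin S → ℝ, Monotone g' → (∀ i, i ≤ s0 → g' i ≤ h0) →
      (∀ i, s0 < i → h0 ≤ g' i) →
      ∑ s, F s * (U s - g s) ^ 2 ≤ ∑ s, F s * (U s - g' s) ^ 2)
    (j k : Fin S) (hjk : j ≤ k)
    (hk : ∀ i, k < i → g k < g i)
    (hcap : ∀ i, j ≤ i → i ≤ k → i ≤ s0 → g i < h0) :
    ∑ i ∈ Finset.Icc j k, F i * (U i - g i) ≤ 0 := by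
  set c := ∑ i ∈ Finset.Icc j k, F i * (U i - g i) with hc
  set W := ∑ i ∈ Finset.Icc j k, F i with hW
  have hWpos : 0 < W := Finset.sum_pos (fun i _ => hF i) (Finset.nonempty_Icc.mpr hjk)
  set B : Finset ℝ := insert 1 (((Finset.Ioi k).image fun i => g i - g k) ∪
      (((Finset.Icc j k).filter fun i => i ≤ s0).image fun i => h0 - g i)) with hB
  have hBne : B.Nonempty := ⟨1, Finset.mem_insert_self _ _⟩
  set b := B.min' hBne with hb
  have hbpos : 0 < b := by
    rw [hb, Finset.lt_min'_iff]
    intro x hx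
    rw [hB] at hx
    rcases Finset.mem_insert.mp hx with h | h
    · simp [h]
    · rcases Finset.mem_union.mp h with h | h
      · obtain ⟨i, hi, rfl⟩ := Finset.mem_image.mp h
        have := hk i (Finset.mem_Ioi.mp hi); linarith
      · obtain ⟨i, hi, rfl⟩ := Finset.mem_image.mp h
        obtain ⟨hi1, hi2⟩ := Finset.mem_filter.mp hi
        have := hcap i (Finset.mem_Icc.mp hi1).1 (Finset.mem_Icc.mp hi1).2 hi2
        linarith
  have key : ∀ ε : ℝ, 0 < ε → ε ≤ b → 0 ≤ -(2 * ε) * c + ε ^ 2 * W := by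
    intro ε hε hεb
    have hεle : ∀ x ∈ B, ε ≤ x := fun x hx => hεb.trans (Finset.min'_le _ _ hx)
    set h : Fin S → ℝ := fun i => if i ∈ Finset.Icc j k then g i + ε else g i with hh
    have hmono' : Monotone h := by
      intro i1 i2 h12
      by_cases m1 : i1 ∈ Finset.Icc j k <;> by_cases m2 : i2 ∈ Finset.Icc j k <;>
        simp only [hh, m1, m2, if_pos, if_neg, if_true, if_false]
      · exact add_le_add_left (hmono h12) ε
      · have hi2k : k < i2 := by
          by_contra hcon
          exact m2 (Finset.mem_Icc.mpr ⟨(Finset.mem_Icc.mp m1).1.trans h12, not_lt.mp hcon⟩)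
        have hmem : (g i2 - g k) ∈ B := by
          rw [hB]
          exact Finset.mem_insert_of_mem (Finset.mem_union_left _
            (Finset.mem_image.mpr ⟨i2, Finset.mem_Ioi.mpr hi2k, rfl⟩))
        have h1 := hεle _ hmem
        have h2 : g i1 ≤ g k := hmono (Finset.mem_Icc.mp m1).2
        linarith
      · have := hmono h12; linarith
      · exact hmono h12
    have hle' : ∀ i, i ≤ s0 → h i ≤ h0 := by
      intro i his
      by_cases m : i ∈ Finset.Icc j k <;> simp only [hh, m, if_pos, if_neg, if_true, if_false]
      · have hmem : (h0 - g i) ∈ B := by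
          rw [hB]
          exact Finset.mem_insert_of_mem (Finset.mem_union_right _
            (Finset.mem_image.mpr ⟨i, Finset.mem_filter.mpr ⟨m, his⟩, rfl⟩))
        have := hεle _ hmem
        linarith
      · exact hle i his
    have hge' : ∀ i, s0 < i → h0 ≤ h i := by
      intro i his
      by_cases m : i ∈ Finset.Icc j k <;> simp only [hh, m, if_pos, if_neg, if_true, if_false]
      · have := hge i his; linarith
      · exact hge i his
    have hQ := hmin h hmono' hle' hge'
    have e2 : ∑ s, F s * (U s - h s) ^ 2 - ∑ s, F s * (U s - g s) ^ 2
        = ∑ i ∈ Finset.Icc j k, (-(2 * ε) * (F i * (U i - g i)) + ε ^ 2 * F i) := by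
      rw [← Finset.sum_sub_distrib,
          ← Finset.sum_subset (Finset.subset_univ (Finset.Icc j k))
            (fun i _ hi => by simp only [hh]; rw [if_neg hi]; ring)]
      refine Finset.sum_congr rfl fun i hi => ?_
      simp only [hh, if_pos hi]
      ring
    rw [Finset.sum_add_distrib, ← Finset.mul_sum, ← Finset.mul_sum, ← hc, ← hW] at e2
    linarith
  by_contra hcon
  push_neg at hcon
  have hεpos : 0 < min b (c / W) := lt_min hbpos (div_pos hcon hWpos)
  have h1 : min b (c / W) ≤ c / W := min_le_right _ _
  have h2 : min b (c / W) * W ≤ c := (le_div_iff₀ hWpos).mp h1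
  have h3 := key _ hεpos (min_le_left _ _)
  nlinarith [mul_le_mul_of_nonneg_left h2 hεpos.le, mul_pos hεpos hcon]

lemma stmt8_avg_ge (S : ℕ) (F U g : Fin S → ℝ) (hF : ∀ s, 0 < F s)
    (a b : Fin S) (hab : a ≤ b) (t : ℝ)
    (hg : ∀ i, a ≤ i → i ≤ b → t ≤ g i)
    (hcpos : 0 ≤ ∑ i ∈ Finset.Icc a b, F i * (U i - g i)) :
    t ≤ (∑ i ∈ Finset.Icc a b, F i * U i) / (∑ i ∈ Finset.Icc a b, F i) := by
  have hWpos : 0 < ∑ i ∈ Finset.Icc a b, F i :=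
    Finset.sum_pos (fun i _ => hF i) (Finset.nonempty_Icc.mpr hab)
  rw [le_div_iff₀ hWpos]
  simp only [mul_sub] at hcpos
  rw [Finset.sum_sub_distrib] at hcpos
  have h1 : t * ∑ i ∈ Finset.Icc a b, F i ≤ ∑ i ∈ Finset.Icc a b, F i * g i := by
    rw [Finset.mul_sum]
    refine Finset.sum_le_sum fun i hi => ?_
    obtain ⟨h1, h2⟩ := Finset.mem_Icc.mp hi
    calc t * F i = F i * t := mul_comm _ _
      _ ≤ F i * g i := mul_le_mul_of_nonneg_left (hg i h1 h2) (hF i).le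
  linarith

lemma stmt8_avg_le (S : ℕ) (F U g : Fin S → ℝ) (hF : ∀ s, 0 < F s)
    (a b : Fin S) (hab : a ≤ b) (t : ℝ)
    (hg : ∀ i, a ≤ i → i ≤ b → g i ≤ t)
    (hcneg : ∑ i ∈ Finset.Icc a b, F i * (U i - g i) ≤ 0) :
    (∑ i ∈ Finset.Icc a b, F i * U i) / (∑ i ∈ Finset.Icc a b, F i) ≤ t := by
  have hWpos : 0 < ∑ i ∈ Finset.Icc a b, F i :=
    Finset.sum_pos (fun i _ => hF i) (Finset.nonempty_Icc.mpr hab)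
  rw [div_le_iff₀ hWpos]
  simp only [mul_sub] at hcneg
  rw [Finset.sum_sub_distrib] at hcneg
  have h1 : ∑ i ∈ Finset.Icc a b, F i * g i ≤ t * ∑ i ∈ Finset.Icc a b, F i := by
    rw [Finset.mul_sum]
    refine Finset.sum_le_sum fun i hi => ?_
    obtain ⟨h1, h2⟩ := Finset.mem_Icc.mp hi
    calc F i * g i ≤ F i * t := mul_le_mul_of_nonneg_left (hg i h1 h2) (hF i).le
      _ = t * F i := mul_comm _ _
  linarith

/-- constrained weighted isotonic regression with a pinned level `h0` at
position `s0` decouples. If `g` minimizes `∑ₛ Fₛ(Ūₛ - hₛ)²` over vectors with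
`h₁ ≤ ⋯ ≤ h_{s0} ≤ h0 ≤ h_{s0+1} ≤ ⋯ ≤ h_S`, then for `s ≤ s0` the solution equals
`min(h0, ·)` of the max-min isotonic formula on the block `{1,…,s0}`, and for `s > s0` it
equals `max(h0, ·)` of the max-min isotonic formula on the block `{s0+1,…,S}`. -/
theorem stmt8 (S : ℕ) (F U : Fin S → ℝ) (hF : ∀ s, 0 < F s)
    (h0 : ℝ) (s0 : Fin S) (g : Fin S → ℝ)
    (hmono : Monotone g)
    (hle : ∀ i, i ≤ s0 → g i ≤ h0)
    (hge : ∀ i, s0 < i → h0 ≤ g i)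
    (hmin : ∀ g' : Fin S → ℝ, Monotone g' → (∀ i, i ≤ s0 → g' i ≤ h0) →
      (∀ i, s0 < i → h0 ≤ g' i) →
      ∑ s, F s * (U s - g s) ^ 2 ≤ ∑ s, F s * (U s - g' s) ^ 2) :
    (∀ s : Fin S, ∀ hs : s ≤ s0,
      g s = min h0
        ((Finset.Iic s).sup' ⟨s, Finset.mem_Iic.2 le_rfl⟩ (fun a =>
          (Finset.Icc s s0).inf' ⟨s, Finset.mem_Icc.2 ⟨le_rfl, hs⟩⟩ (fun b =>
            (∑ i ∈ Finset.Icc a b, F i * U i) / (∑ i ∈ Finset.Icc a b, F i))))) ∧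
    (∀ s : Fin S, ∀ hs : s0 < s,
      g s = max h0
        ((Finset.Ioc s0 s).sup' ⟨s, Finset.mem_Ioc.2 ⟨hs, le_rfl⟩⟩ (fun a =>
          (Finset.Ici s).inf' ⟨s, Finset.mem_Ici.2 le_rfl⟩ (fun b =>
            (∑ i ∈ Finset.Icc a b, F i * U i) / (∑ i ∈ Finset.Icc a b, F i))))) := by
  constructor
  · -- left block
    intro s hs
    -- upper witness: start of level block of s
    set A := Finset.univ.filter (fun a : Fin S => g a = g s) with hA
    have hsA : s ∈ A := Finset.mem_filter.mpr ⟨Finset.mem_univ s, rfl⟩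
    have hAne : A.Nonempty := ⟨s, hsA⟩
    set a0 := A.min' hAne with ha0
    have ha0g : g a0 = g s := (Finset.mem_filter.mp (A.min'_mem hAne)).2
    have ha0s : a0 ≤ s := A.min'_le s hsA
    have hjprop : ∀ i, i < a0 → g i < g a0 := by
      intro i hi
      have h1 : g i ≤ g s := hmono (hi.le.trans ha0s)
      have h2 : g i ≠ g s := fun he =>
        absurd (A.min'_le i (Finset.mem_filter.mpr ⟨Finset.mem_univ i, he⟩)) (not_le.mpr hi)
      rw [ha0g]; exact lt_of_le_of_ne h1 h2
    have hupper : g s ≤ (Finset.Iic s).sup' ⟨s, Finset.mem_Iic.2 le_rfl⟩ (fun a =>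
        (Finset.Icc s s0).inf' ⟨s, Finset.mem_Icc.2 ⟨le_rfl, hs⟩⟩ (fun b =>
          (∑ i ∈ Finset.Icc a b, F i * U i) / (∑ i ∈ Finset.Icc a b, F i))) := by
      refine Finset.le_sup'_of_le _ (Finset.mem_Iic.mpr ha0s) ?_
      refine Finset.le_inf' _ _ ?_
      intro b hb
      obtain ⟨hsb, hbs0⟩ := Finset.mem_Icc.mp hb
      have hab : a0 ≤ b := ha0s.trans hsb
      have hc := stmt8_key_down S F U hF h0 s0 g hmono hle hge hmin a0 b hab hjprop
        (fun i hi1 hi2 hi3 => absurd (hi2.trans hbs0) (not_le.mpr hi3))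
      exact stmt8_avg_ge S F U g hF a0 b hab (g s)
        (fun i hi1 _ => ha0g ▸ hmono hi1) hc
    refine le_antisymm (le_min (hle s hs) hupper) ?_
    rcases (hle s hs).lt_or_eq with hlt | heq
    · -- g s < h0 : show sup' ≤ g s
      refine le_trans (min_le_right _ _) (Finset.sup'_le _ _ ?_)
      intro a ha
      have has : a ≤ s := Finset.mem_Iic.mp ha
      set Bs := Finset.univ.filter (fun bb : Fin S => bb ≤ s0 ∧ g bb = g s) with hBs
      have hsBs : s ∈ Bs := Finset.mem_filter.mpr ⟨Finset.mem_univ s, hs, rfl⟩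
      have hBsne : Bs.Nonempty := ⟨s, hsBs⟩
      set b0 := Bs.max' hBsne with hb0
      obtain ⟨hb0s0, hb0g⟩ := (Finset.mem_filter.mp (Bs.max'_mem hBsne)).2
      have hsb0 : s ≤ b0 := Bs.le_max' s hsBs
      have hkprop : ∀ i, b0 < i → g b0 < g i := by
        intro i hi
        have hgi : g s ≤ g i := hmono (hsb0.trans hi.le)
        rw [hb0g]
        by_cases his0 : i ≤ s0
        · refine lt_of_le_of_ne hgi fun he => ?_
          exact absurd (Bs.le_max' i (Finset.mem_filter.mpr
            ⟨Finset.mem_univ i, his0, he.symm⟩)) (not_le.mpr hi)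
        · exact lt_of_lt_of_le hlt (hge i (not_le.mp his0))
      have hab0 : a ≤ b0 := has.trans hsb0
      have hc := stmt8_key_up S F U hF h0 s0 g hmono hle hge hmin a b0 hab0 hkprop
        (fun i _ hi2 _ => lt_of_le_of_lt (hb0g ▸ hmono hi2) hlt)
      refine le_trans (Finset.inf'_le _ (Finset.mem_Icc.mpr ⟨hsb0, hb0s0⟩)) ?_
      exact stmt8_avg_le S F U g hF a b0 hab0 (g s)
        (fun i _ hi2 => hb0g ▸ hmono hi2) hc
    · exact le_of_le_of_eq (min_le_left _ _) heq.symm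
  · -- right block
    intro s hs
    set Bs := Finset.univ.filter (fun bb : Fin S => g bb = g s) with hBs
    have hsBs : s ∈ Bs := Finset.mem_filter.mpr ⟨Finset.mem_univ s, rfl⟩
    have hBsne : Bs.Nonempty := ⟨s, hsBs⟩
    set b0 := Bs.max' hBsne with hb0
    have hb0g : g b0 = g s := (Finset.mem_filter.mp (Bs.max'_mem hBsne)).2
    have hsb0 : s ≤ b0 := Bs.le_max' s hsBs
    have hkprop : ∀ i, b0 < i → g b0 < g i := by
      intro i hi
      have hgi : g s ≤ g i := hmono (hsb0.trans hi.le)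
      have h2 : g i ≠ g s := fun he =>
        absurd (Bs.le_max' i (Finset.mem_filter.mpr ⟨Finset.mem_univ i, he⟩)) (not_le.mpr hi)
      rw [hb0g]; exact lt_of_le_of_ne hgi (Ne.symm h2)
    have hupper : (Finset.Ioc s0 s).sup' ⟨s, Finset.mem_Ioc.2 ⟨hs, le_rfl⟩⟩ (fun a =>
        (Finset.Ici s).inf' ⟨s, Finset.mem_Ici.2 le_rfl⟩ (fun b =>
          (∑ i ∈ Finset.Icc a b, F i * U i) / (∑ i ∈ Finset.Icc a b, F i))) ≤ g s := by
      refine Finset.sup'_le _ _ ?_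
      intro a ha
      obtain ⟨hs0a, has⟩ := Finset.mem_Ioc.mp ha
      have hab0 : a ≤ b0 := has.trans hsb0
      have hc := stmt8_key_up S F U hF h0 s0 g hmono hle hge hmin a b0 hab0 hkprop
        (fun i hi1 _ hi3 => absurd (lt_of_lt_of_le hs0a hi1) (not_lt.mpr hi3))
      refine le_trans (Finset.inf'_le _ (Finset.mem_Ici.mpr hsb0)) ?_
      exact stmt8_avg_le S F U g hF a b0 hab0 (g s)
        (fun i _ hi2 => hb0g ▸ hmono hi2) hc
    refine le_antisymm ?_ (max_le (hge s hs) hupper)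
    rcases (hge s hs).lt_or_eq with hlt | heq
    · -- h0 < g s : show g s ≤ sup'
      refine le_trans ?_ (le_max_right _ _)
      set A := Finset.univ.filter (fun a : Fin S => s0 < a ∧ g a = g s) with hA
      have hsA : s ∈ A := Finset.mem_filter.mpr ⟨Finset.mem_univ s, hs, rfl⟩
      have hAne : A.Nonempty := ⟨s, hsA⟩
      set a0 := A.min' hAne with ha0
      obtain ⟨hs0a0, ha0g⟩ := (Finset.mem_filter.mp (A.min'_mem hAne)).2
      have ha0s : a0 ≤ s := A.min'_le s hsA
      have hjprop : ∀ i, i < a0 → g i < g a0 := by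
        intro i hi
        rw [ha0g]
        by_cases his0 : s0 < i
        · have h1 : g i ≤ g s := hmono (hi.le.trans ha0s)
          refine lt_of_le_of_ne h1 fun he => ?_
          exact absurd (A.min'_le i (Finset.mem_filter.mpr
            ⟨Finset.mem_univ i, his0, he⟩)) (not_le.mpr hi)
        · exact lt_of_le_of_lt (hle i (not_lt.mp his0)) hlt
      refine Finset.le_sup'_of_le _ (Finset.mem_Ioc.mpr ⟨hs0a0, ha0s⟩) ?_
      refine Finset.le_inf' _ _ ?_
      intro b hb
      have hsb : s ≤ b := Finset.mem_Ici.mp hb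
      have hab : a0 ≤ b := ha0s.trans hsb
      have hc := stmt8_key_down S F U hF h0 s0 g hmono hle hge hmin a0 b hab hjprop
        (fun i hi1 _ _ => lt_of_lt_of_le hlt (ha0g ▸ hmono hi1))
      exact stmt8_avg_ge S F U g hF a0 b hab (g s)
        (fun i hi1 _ => ha0g ▸ hmono hi1) hc
    · exact le_of_eq_of_le heq.symm (le_max_left _ _)
end
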